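/- Let p be a prime and 1 ≤ m ≤ n ≤ p−1. Then diam(D(p; m, n)) = 2p − 1 if and only if m = n = p−1. -/
import Mathlib

/-- `walkLen r k x y` means there is a directed walk of length exactly `k`
from `x` to `y` in the digraph with arc relation `r`. -/
def walkLen {V : Type*} (r : V → V → Prop) : ℕ → V → V → Prop
  | 0 => fun x y => x = y
  | k + 1 => fun x y => ∃ z, r x z ∧ walkLen r k z y

/-- The distance from `x` to `y`: the minimum length of a directed walk,
`⊤` if `y` is not reachable from `x`. -/
noncomputable def ddist {V : Type*} (r : V → V → Prop) (x y : V) : ℕ∞ :=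
  ⨅ n ∈ {n : ℕ | walkLen r n x y}, (n : ℕ∞)

/-- The diameter of the digraph: the maximum of distances over all ordered pairs. -/
noncomputable def ddiam {V : Type*} (r : V → V → Prop) : ℕ∞ :=
  ⨆ x, ⨆ y, ddist r x y

/-- A digraph is strong if every vertex is reachable from every vertex. -/
def IsStrongDigraph {V : Type*} (r : V → V → Prop) : Prop :=
  ∀ x y : V, ∃ n : ℕ, walkLen r n x y

/-- The arc relation of the monomial digraph `D(q; m, n)`:
`(x₁, x₂) → (y₁, y₂)` iff `x₂ + y₂ = x₁ ^ m * y₁ ^ n`. -/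
def monomialArc {F : Type*} [Field F] (m n : ℕ) (x y : F × F) : Prop :=
  x.2 + y.2 = x.1 ^ m * y.1 ^ n

section Generic
variable {V W : Type*} {r : V → V → Prop} {r' : W → W → Prop}

lemma walkLen_zero {x y : V} : walkLen r 0 x y ↔ x = y := Iff.rfl

lemma walkLen_succ {k : ℕ} {x y : V} :
    walkLen r (k+1) x y ↔ ∃ z, r x z ∧ walkLen r k z y := Iff.rfl

lemma walkLen_trans : ∀ {k₁ k₂ : ℕ} {x z y : V},
    walkLen r k₁ x z → walkLen r k₂ z y → walkLen r (k₁ + k₂) x y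
  | 0, k₂, x, z, y, h1, h2 => by rw [walkLen_zero] at h1; subst h1; simpa using h2
  | k₁+1, k₂, x, z, y, h1, h2 => by
    obtain ⟨w, hw, h1'⟩ := h1
    have : k₁ + 1 + k₂ = (k₁ + k₂) + 1 := by omega
    rw [this]
    exact ⟨w, hw, walkLen_trans h1' h2⟩

lemma ddist_le {x y : V} {k : ℕ} (h : walkLen r k x y) : ddist r x y ≤ k :=
  iInf₂_le k h

lemma le_ddist {x y : V} {c : ℕ} (h : ∀ k, walkLen r k x y → c ≤ k) :
    (c : ℕ∞) ≤ ddist r x y :=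
  le_iInf₂ fun n hn => Nat.cast_le.2 (h n hn)

lemma ddist_le_ddiam {x y : V} : ddist r x y ≤ ddiam r :=
  le_iSup₂ (f := fun x y => ddist r x y) x y

lemma ddiam_le {c : ℕ} (h : ∀ x y : V, ∃ k ≤ c, walkLen r k x y) : ddiam r ≤ c :=
  iSup₂_le fun x y => by
    obtain ⟨k, hk, hw⟩ := h x y
    exact (ddist_le hw).trans (Nat.cast_le.2 hk)

lemma walkLen_equiv (e : V ≃ W) (h : ∀ a b, r a b ↔ r' (e a) (e b)) :
    ∀ (k : ℕ) (x y : V), walkLen r k x y ↔ walkLen r' k (e x) (e y)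
  | 0, x, y => by simp [walkLen_zero, e.injective.eq_iff]
  | k+1, x, y => by
    rw [walkLen_succ, walkLen_succ]
    constructor
    · rintro ⟨z, hz, hw⟩
      exact ⟨e z, (h x z).1 hz, (walkLen_equiv e h k z y).1 hw⟩
    · rintro ⟨w, hz, hw⟩
      refine ⟨e.symm w, ?_, ?_⟩
      · have := (h x (e.symm w)).2; simp only [e.apply_symm_apply] at this; exact this hz
      · have := (walkLen_equiv e h k (e.symm w) y).2
        simp only [e.apply_symm_apply] at this; exact this hw

lemma ddist_equiv (e : V ≃ W) (h : ∀ a b, r a b ↔ r' (e a) (e b)) (x y : V) :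
    ddist r x y = ddist r' (e x) (e y) := by
  unfold ddist
  have : {n : ℕ | walkLen r n x y} = {n : ℕ | walkLen r' n (e x) (e y)} :=
    Set.ext fun n => walkLen_equiv e h n x y
  rw [this]

lemma ddiam_equiv (e : V ≃ W) (h : ∀ a b, r a b ↔ r' (e a) (e b)) :
    ddiam r = ddiam r' := by
  apply le_antisymm
  · refine iSup₂_le fun x y => ?_
    rw [ddist_equiv e h x y]
    exact le_iSup₂ (f := fun x y => ddist r' x y) (e x) (e y)
  · refine iSup₂_le fun x y => ?_
    have := ddist_equiv e h (e.symm x) (e.symm y)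
    simp only [e.apply_symm_apply] at this
    rw [← this]
    exact le_iSup₂ (f := fun x y => ddist r x y) (e.symm x) (e.symm y)

instance walkLenDecidable [Fintype V] [DecidableEq V] (r : V → V → Prop) [DecidableRel r] :
    ∀ (k : ℕ) (x y : V), Decidable (walkLen r k x y)
  | 0, x, y => decidable_of_iff (x = y) walkLen_zero.symm
  | k+1, x, y =>
    haveI := walkLenDecidable r k
    decidable_of_iff (∃ z, r x z ∧ walkLen r k z y) walkLen_succ.symm

end Generic

instance {p : ℕ} [Fact p.Prime] (m n : ℕ) :
    DecidableRel (monomialArc (F := ZMod p) m n) :=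
  fun x y => decidable_of_iff (x.2 + y.2 = x.1 ^ m * y.1 ^ n) Iff.rfl

def lob : ℕ → Bool → Bool → ℤ
  | k, false, false => -((k/4 : ℕ) : ℤ)
  | k, false, true =>
      if k % 4 = 0 then 1 - ((k/4:ℕ):ℤ) else if k % 4 = 3 then -((k/4:ℕ):ℤ) - 1 else -((k/4:ℕ):ℤ)
  | k, true, false => if k % 4 ≤ 1 then -((k/4:ℕ):ℤ) else -((k/4:ℕ):ℤ) - 1
  | k, true, true => if k % 4 = 1 ∨ k % 4 = 3 then -((k/4:ℕ):ℤ) - 1 else -((k/4:ℕ):ℤ)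

def hib : ℕ → Bool → Bool → ℤ
  | k, false, false => if k % 4 = 3 then ((k/4:ℕ):ℤ) + 1 else ((k/4:ℕ):ℤ)
  | k, false, true => if k % 4 = 2 then ((k/4:ℕ):ℤ) + 1 else ((k/4:ℕ):ℤ)
  | k, true, false => if k % 4 = 0 then ((k/4:ℕ):ℤ) - 1 else ((k/4:ℕ):ℤ)
  | k, true, true => if k % 4 = 1 then ((k/4:ℕ):ℤ) - 1 else ((k/4:ℕ):ℤ)

lemma step_bounds (k : ℕ) (a c b : Bool) (B' : ℤ)
    (h1 : lob k c b ≤ B') (h2 : B' ≤ hib k c b) :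
    lob (k+1) a b ≤ -(if a && c then (1:ℤ) else 0) - B' ∧
      -(if a && c then (1:ℤ) else 0) - B' ≤ hib (k+1) a b := by
  cases a <;> cases c <;> cases b <;>
    simp only [lob, hib, Bool.and_self, Bool.and_false, Bool.and_true, Bool.false_and,
      Bool.true_and, if_true, if_false] at * <;>
    split_ifs at * <;> omega

variable {p : ℕ} [Fact p.Prime]

lemma inv_lemma : ∀ (k : ℕ) (x y α β : ZMod p),
    walkLen (monomialArc (p-1) (p-1)) k (x, α) (y, β) →
    ∃ B : ℤ, β = (-1)^k * (α + (B : ZMod p)) ∧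
      lob k (!decide (x = 0)) (!decide (y = 0)) ≤ B ∧
      B ≤ hib k (!decide (x = 0)) (!decide (y = 0))
  | 0, x, y, α, β, hw => by
    rw [walkLen_zero, Prod.mk.injEq] at hw
    obtain ⟨rfl, rfl⟩ := hw
    refine ⟨0, by simp, ?_, ?_⟩ <;> cases (!decide (x = 0)) <;> simp [lob, hib]
  | k+1, x, y, α, β, hw => by
    rw [walkLen_succ] at hw
    obtain ⟨⟨z, γ⟩, harc, hw'⟩ := hw
    obtain ⟨B', hβ, hlo, hhi⟩ := inv_lemma k z y γ β hw'
    have harc' : α + γ = x ^ (p-1) * z ^ (p-1) := harc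
    have hp1 : p - 1 ≠ 0 := by
      have := (Fact.out : p.Prime).two_le; omega
    have hpow : x ^ (p-1) * z ^ (p-1)
        = (((if (!decide (x = 0)) && (!decide (z = 0)) then (1:ℤ) else 0) : ℤ) : ZMod p) := by
      by_cases hx : x = 0 <;> by_cases hz : z = 0 <;>
        simp [hx, hz, zero_pow hp1, ZMod.pow_card_sub_one_eq_one]
    set c : ℤ := if (!decide (x = 0)) && (!decide (z = 0)) then (1:ℤ) else 0 with hc
    refine ⟨-c - B', ?_, ?_, ?_⟩
    · have hγ : γ = (c : ZMod p) - α := by rw [← hpow]; linear_combination harc'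
      rw [hβ, hγ, pow_succ]
      push_cast
      ring
    · exact (step_bounds k _ _ _ B' hlo hhi).1
    · exact (step_bounds k _ _ _ B' hlo hhi).2

lemma lower_bound (h : ℕ) (hh : p = 2*h + 1) (k : ℕ) (hk : k ≤ 4*h) :
    ¬ walkLen (monomialArc (p-1) (p-1)) k ((0 : ZMod p), 0) (1, ((h+1 : ℕ) : ZMod p)) := by
  intro hw
  obtain ⟨B, hβ, hlo, hhi⟩ := inv_lemma k 0 1 0 _ hw
  have h1 : ((1 : ZMod p) ≠ 0) := one_ne_zero
  have e0 : (!decide ((0:ZMod p) = 0)) = false := by simp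
  have e1 : (!decide ((1:ZMod p) = 0)) = true := by simp [h1]
  rw [e0, e1] at hlo hhi
  rw [zero_add] at hβ
  rcases Nat.even_or_odd k with hke | hko
  · obtain ⟨j2, hk2⟩ := hke
    rw [(Even.neg_one_pow (⟨j2, hk2⟩ : Even k) : ((-1:ZMod p))^k = 1), one_mul] at hβ
    have : ((h+1 : ℤ) : ZMod p) = ((B : ℤ) : ZMod p) := by push_cast at hβ ⊢; exact hβ
    have hdvd : (p:ℤ) ∣ B - (h+1) := ((ZMod.intCast_eq_intCast_iff _ _ _).1 this).dvd
    have hBne : B - (h+1) = 0 := by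
      apply Int.eq_zero_of_abs_lt_dvd hdvd
      rw [abs_lt]
      simp only [lob, hib] at hlo hhi
      split_ifs at hlo hhi <;> omega
    simp only [lob, hib] at hlo hhi
    split_ifs at hlo hhi <;> omega
  · obtain ⟨j2, hk2⟩ := hko
    rw [(Odd.neg_one_pow (⟨j2, hk2⟩ : Odd k) : ((-1:ZMod p))^k = -1), neg_one_mul] at hβ
    have : ((h+1 : ℤ) : ZMod p) = ((-B : ℤ) : ZMod p) := by push_cast at hβ ⊢; exact hβ
    have hdvd : (p:ℤ) ∣ B + (h+1) := by
      have h2 := ((ZMod.intCast_eq_intCast_iff _ _ _).1 this).dvd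
      have h3 := dvd_neg.2 h2
      have h4 : -(-B - (h+1)) = B + (h+1) := by ring
      rwa [h4] at h3
    have hBne : B + (h+1) = 0 := by
      apply Int.eq_zero_of_abs_lt_dvd hdvd
      rw [abs_lt]
      simp only [lob, hib] at hlo hhi
      split_ifs at hlo hhi <;> omega
    simp only [lob, hib] at hlo hhi
    split_ifs at hlo hhi <;> omega

section Gadgets
variable {p : ℕ} [Fact p.Prime]

lemma walkLen_trans' {V : Type*} {r : V → V → Prop} : ∀ {k₁ k₂ : ℕ} {x z y : V},
    walkLen r k₁ x z → walkLen r k₂ z y → walkLen r (k₁ + k₂) x y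
  | 0, k₂, x, z, y, h1, h2 => by rw [walkLen_zero] at h1; subst h1; simpa using h2
  | k₁+1, k₂, x, z, y, h1, h2 => by
    obtain ⟨w, hw, h1'⟩ := h1
    have he : k₁ + 1 + k₂ = (k₁ + k₂) + 1 := by omega
    rw [he]
    exact ⟨w, hw, walkLen_trans' h1' h2⟩

lemma wl1 {V : Type*} {r : V → V → Prop} {x y : V} (h : r x y) : walkLen r 1 x y :=
  ⟨y, h, rfl⟩

local notation "Arc" => monomialArc (F := ZMod p) (p-1) (p-1)

lemma hq_ne : p - 1 ≠ 0 := by have := (Fact.out : p.Prime).two_le; omega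

lemma arc_to_zero (x α : ZMod p) : Arc (x, α) ((0 : ZMod p), -α) := by
  simp [monomialArc, zero_pow (hq_ne (p := p))]

lemma arc_from_zero (α y : ZMod p) : Arc ((0 : ZMod p), α) (y, -α) := by
  simp [monomialArc, zero_pow (hq_ne (p := p))]

lemma arc_nn {x y : ZMod p} (hx : x ≠ 0) (hy : y ≠ 0) (α : ZMod p) :
    Arc (x, α) (y, 1 - α) := by
  simp [monomialArc, ZMod.pow_card_sub_one_eq_one hx, ZMod.pow_card_sub_one_eq_one hy]

lemma onz : (1 : ZMod p) ≠ 0 := one_ne_zero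

lemma shift1up : ∀ (t : ℕ) (α : ZMod p) {x y : ZMod p}, x ≠ 0 → y ≠ 0 →
    walkLen Arc (4*(t+1)) (x, α) (y, α + ((t+1 : ℕ) : ZMod p))
  | 0, α, x, y, hx, hy => by
    have w1 := wl1 (arc_to_zero x α)
    have w2 := wl1 (arc_from_zero (-α) (0 : ZMod p))
    have w3 := wl1 (arc_from_zero (- -α) (1 : ZMod p))
    have w4 := wl1 (arc_nn (onz (p := p)) hy (- - -α))
    have e1 : 4*(0+1) = 1 + (1 + (1 + 1)) := by norm_num
    rw [e1]
    convert walkLen_trans' w1 (walkLen_trans' w2 (walkLen_trans' w3 w4)) using 2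
    push_cast; ring
  | t+1, α, x, y, hx, hy => by
    have W1 : walkLen Arc (4*(0+1)) (x, α) (1, α + ((0+1 : ℕ) : ZMod p)) :=
      shift1up 0 α hx (onz (p := p))
    have W2 := shift1up t (α + ((0+1 : ℕ) : ZMod p)) (onz (p := p)) hy
    have he : 4*(t+1+1) = 4*(0+1) + 4*(t+1) := by omega
    rw [he]
    convert walkLen_trans' W1 W2 using 2
    push_cast; ring

lemma shift1down : ∀ (t : ℕ) (α : ZMod p) {x y : ZMod p}, x ≠ 0 → y ≠ 0 →
    walkLen Arc (4*(t+1)) (x, α) (y, α - ((t+1 : ℕ) : ZMod p))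
  | 0, α, x, y, hx, hy => by
    have w1 := wl1 (arc_nn hx (onz (p := p)) α)
    have w2 := wl1 (arc_to_zero (1 : ZMod p) (1 - α))
    have w3 := wl1 (arc_from_zero (-(1-α)) (0 : ZMod p))
    have w4 := wl1 (arc_from_zero (- -(1-α)) y)
    have e1 : 4*(0+1) = 1 + (1 + (1 + 1)) := by norm_num
    rw [e1]
    convert walkLen_trans' w1 (walkLen_trans' w2 (walkLen_trans' w3 w4)) using 2
    push_cast; ring
  | t+1, α, x, y, hx, hy => by
    have W1 : walkLen Arc (4*(0+1)) (x, α) (1, α - ((0+1 : ℕ) : ZMod p)) :=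
      shift1down 0 α hx (onz (p := p))
    have W2 := shift1down t (α - ((0+1 : ℕ) : ZMod p)) (onz (p := p)) hy
    have he : 4*(t+1+1) = 4*(0+1) + 4*(t+1) := by omega
    rw [he]
    convert walkLen_trans' W1 W2 using 2
    push_cast; ring

lemma shift0up : ∀ (t : ℕ) (α : ZMod p),
    walkLen Arc (4*(t+1)) ((0 : ZMod p), α) ((0 : ZMod p), α + ((t+1 : ℕ) : ZMod p))
  | 0, α => by
    have w1 := wl1 (arc_from_zero α (1 : ZMod p))
    have w2 := wl1 (arc_nn (onz (p := p)) (onz (p := p)) (-α))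
    have w3 := wl1 (arc_to_zero (1 : ZMod p) (1 - -α))
    have w4 := wl1 (arc_from_zero (-(1 - -α)) (0 : ZMod p))
    have e1 : 4*(0+1) = 1 + (1 + (1 + 1)) := by norm_num
    rw [e1]
    convert walkLen_trans' w1 (walkLen_trans' w2 (walkLen_trans' w3 w4)) using 2
    push_cast; ring
  | t+1, α => by
    have W1 := shift0up 0 α
    have W2 := shift0up t (α + ((0+1 : ℕ) : ZMod p))
    have he : 4*(t+1+1) = 4*(0+1) + 4*(t+1) := by omega
    rw [he]
    convert walkLen_trans' W1 W2 using 2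
    push_cast; ring

lemma shift0down : ∀ (t : ℕ) (α : ZMod p),
    walkLen Arc (4*(t+1)) ((0 : ZMod p), α) ((0 : ZMod p), α - ((t+1 : ℕ) : ZMod p))
  | 0, α => by
    have w1 := wl1 (arc_from_zero α (0 : ZMod p))
    have w2 := wl1 (arc_from_zero (-α) (1 : ZMod p))
    have w3 := wl1 (arc_nn (onz (p := p)) (onz (p := p)) (- -α))
    have w4 := wl1 (arc_to_zero (1 : ZMod p) (1 - - -α))
    have e1 : 4*(0+1) = 1 + (1 + (1 + 1)) := by norm_num
    rw [e1]
    convert walkLen_trans' w1 (walkLen_trans' w2 (walkLen_trans' w3 w4)) using 2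
    push_cast; ring
  | t+1, α => by
    have W1 := shift0down 0 α
    have W2 := shift0down t (α - ((0+1 : ℕ) : ZMod p))
    have he : 4*(t+1+1) = 4*(0+1) + 4*(t+1) := by omega
    rw [he]
    convert walkLen_trans' W1 W2 using 2
    push_cast; ring

lemma id1 {x y : ZMod p} (hx : x ≠ 0) (hy : y ≠ 0) (α : ZMod p) :
    walkLen Arc 2 (x, α) (y, α) := by
  have w1 := wl1 (arc_nn hx (onz (p := p)) α)
  have w2 := wl1 (arc_nn (onz (p := p)) hy (1 - α))
  have e1 : (2 : ℕ) = 1 + 1 := by norm_num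
  rw [e1]
  convert walkLen_trans' w1 w2 using 2
  ring

lemma id0 (α : ZMod p) : walkLen Arc 2 ((0 : ZMod p), α) ((0 : ZMod p), α) := by
  have w1 := wl1 (arc_from_zero α (0 : ZMod p))
  have w2 := wl1 (arc_from_zero (-α) (0 : ZMod p))
  have e1 : (2 : ℕ) = 1 + 1 := by norm_num
  rw [e1]
  convert walkLen_trans' w1 w2 using 2
  ring

end Gadgets

section Reach
variable {p : ℕ} [Fact p.Prime]
local notation "Arc" => monomialArc (F := ZMod p) (p-1) (p-1)

lemma val_cast_eq (d : ZMod p) : ((d.val : ℕ) : ZMod p) = d :=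
  ZMod.natCast_rightInverse d

lemma reach11 {h : ℕ} (hh : p = 2*h + 1) {x y : ZMod p} (hx : x ≠ 0) (hy : y ≠ 0)
    (α β : ZMod p) : ∃ k ≤ 4*h, walkLen Arc k (x, α) (y, β) := by
  have hp2 := (Fact.out : p.Prime).two_le
  set d := β - α with hd
  by_cases hd0 : d = 0
  · have hβ : β = α := sub_eq_zero.1 hd0
    exact ⟨2, by omega, hβ ▸ id1 hx hy α⟩
  · have hvlt : d.val < p := ZMod.val_lt d
    have hvne : d.val ≠ 0 := fun hc => hd0 ((ZMod.val_eq_zero d).1 hc)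
    by_cases hvh : d.val ≤ h
    · refine ⟨4 * d.val, by omega, ?_⟩
      have W := shift1up (d.val - 1) α hx hy
      have he : d.val - 1 + 1 = d.val := by omega
      rw [he] at W
      have hβ : α + ((d.val : ℕ) : ZMod p) = β := by rw [val_cast_eq]; ring
      rwa [hβ] at W
    · refine ⟨4 * (p - d.val), by omega, ?_⟩
      have W := shift1down (p - d.val - 1) α hx hy
      have he : p - d.val - 1 + 1 = p - d.val := by omega
      rw [he] at W
      have hβ : α - (((p - d.val : ℕ)) : ZMod p) = β := by
        have : ((p - d.val : ℕ) : ZMod p) = (p : ZMod p) - ((d.val : ℕ) : ZMod p) := by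
          push_cast [Nat.cast_sub (le_of_lt hvlt)]; ring
        rw [this, ZMod.natCast_self, val_cast_eq]; ring
      rwa [hβ] at W

lemma reach00 {h : ℕ} (hh : p = 2*h + 1) (α β : ZMod p) :
    ∃ k ≤ 4*h, walkLen Arc k ((0 : ZMod p), α) ((0 : ZMod p), β) := by
  have hp2 := (Fact.out : p.Prime).two_le
  set d := β - α with hd
  by_cases hd0 : d = 0
  · have hβ : β = α := sub_eq_zero.1 hd0
    exact ⟨2, by omega, hβ ▸ id0 α⟩
  · have hvlt : d.val < p := ZMod.val_lt d
    have hvne : d.val ≠ 0 := fun hc => hd0 ((ZMod.val_eq_zero d).1 hc)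
    by_cases hvh : d.val ≤ h
    · refine ⟨4 * d.val, by omega, ?_⟩
      have W := shift0up (d.val - 1) α
      have he : d.val - 1 + 1 = d.val := by omega
      rw [he] at W
      have hβ : α + ((d.val : ℕ) : ZMod p) = β := by rw [val_cast_eq]; ring
      rwa [hβ] at W
    · refine ⟨4 * (p - d.val), by omega, ?_⟩
      have W := shift0down (p - d.val - 1) α
      have he : p - d.val - 1 + 1 = p - d.val := by omega
      rw [he] at W
      have hβ : α - (((p - d.val : ℕ)) : ZMod p) = β := by
        have : ((p - d.val : ℕ) : ZMod p) = (p : ZMod p) - ((d.val : ℕ) : ZMod p) := by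
          push_cast [Nat.cast_sub (le_of_lt hvlt)]; ring
        rw [this, ZMod.natCast_self, val_cast_eq]; ring
      rwa [hβ] at W

lemma upper_all {h : ℕ} (hh : p = 2*h + 1) (u v : ZMod p × ZMod p) :
    ∃ k ≤ 4*h + 1, walkLen Arc k u v := by
  obtain ⟨x, α⟩ := u
  obtain ⟨y, β⟩ := v
  by_cases hx : x = 0 <;> by_cases hy : y = 0
  · subst hx; subst hy
    obtain ⟨k, hk, W⟩ := reach00 hh α β
    exact ⟨k, by omega, W⟩
  · subst hx
    obtain ⟨k, hk, W⟩ := reach00 hh α (-β)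
    refine ⟨k + 1, by omega, walkLen_trans' W (wl1 ?_)⟩
    have := arc_from_zero (p := p) (-β) y
    simpa using this
  · subst hy
    obtain ⟨k, hk, W⟩ := reach11 hh hx (onz (p := p)) α (-β)
    refine ⟨k + 1, by omega, walkLen_trans' W (wl1 ?_)⟩
    have := arc_to_zero (p := p) (1 : ZMod p) (-β)
    simpa using this
  · obtain ⟨k, hk, W⟩ := reach11 hh hx hy α β
    exact ⟨k, by omega, W⟩

end Reach

section Forward
open Pointwise

variable {p : ℕ} [Fact p.Prime]

lemma units_pow_ne_one {j : ℕ} (hj1 : 1 ≤ j) (hj2 : j ≤ p - 2) (g : (ZMod p)ˣ)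
    (hg : ∀ x : (ZMod p)ˣ, x ∈ Subgroup.zpowers g) : ((g : ZMod p))^j ≠ 1 := by
  have hp2 := (Fact.out : p.Prime).two_le
  intro hc
  have hgj : g ^ j = 1 := by
    ext
    push_cast
    exact hc
  have hord : orderOf g = p - 1 := by
    rw [orderOf_eq_card_of_forall_mem_zpowers hg, Nat.card_eq_fintype_card, ZMod.card_units p]
  have hdvd : orderOf g ∣ j := orderOf_dvd_of_pow_eq_one hgj
  rw [hord] at hdvd
  have := Nat.le_of_dvd (by omega) hdvd
  omega

noncomputable def Rset (p m n : ℕ) [NeZero p] : Finset (ZMod p) :=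
  Finset.image (fun uv : ZMod p × ZMod p => uv.1 ^ m * uv.2 ^ n) Finset.univ

lemma one_mem_Rset (m n : ℕ) : (1 : ZMod p) ∈ Rset p m n :=
  Finset.mem_image.2 ⟨(1, 1), Finset.mem_univ _, by simp⟩

lemma Rset_card {m n : ℕ} (hm : 1 ≤ m) (hmn : m ≤ n) (hn : n ≤ p - 1)
    (hne : ¬(m = p - 1 ∧ n = p - 1)) : 3 ≤ (Rset p m n).card := by
  have hp2 := (Fact.out : p.Prime).two_le
  obtain ⟨g, hg⟩ := IsCyclic.exists_generator (α := (ZMod p)ˣ)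
  have h0 : (0 : ZMod p) ∈ Rset p m n := by
    refine Finset.mem_image.2 ⟨(0, 1), Finset.mem_univ _, ?_⟩
    simp [zero_pow (show m ≠ 0 by omega)]
  have h1 : (1 : ZMod p) ∈ Rset p m n := one_mem_Rset m n
  obtain ⟨j, hj1, hj2, hjw⟩ : ∃ j, 1 ≤ j ∧ j ≤ p - 2 ∧ ((g : ZMod p))^j ∈ Rset p m n := by
    by_cases hnn : n = p - 1
    · refine ⟨m, hm, by omega, ?_⟩
      refine Finset.mem_image.2 ⟨((g : ZMod p), 1), Finset.mem_univ _, ?_⟩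
      simp
    · refine ⟨n, by omega, by omega, ?_⟩
      refine Finset.mem_image.2 ⟨(1, (g : ZMod p)), Finset.mem_univ _, ?_⟩
      simp
  set w := ((g : ZMod p))^j with hw
  have hwne1 : w ≠ 1 := units_pow_ne_one hj1 hj2 g hg
  have hwne0 : w ≠ 0 := pow_ne_zero _ (Units.ne_zero g)
  have hsub : ({0, 1, w} : Finset (ZMod p)) ⊆ Rset p m n := by
    intro a ha
    simp only [Finset.mem_insert, Finset.mem_singleton] at ha
    rcases ha with rfl | rfl | rfl <;> assumption
  have hcard : ({0, 1, w} : Finset (ZMod p)).card = 3 := by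
    rw [Finset.card_insert_of_notMem (by simp [Ne.symm hwne0, (zero_ne_one (α := ZMod p))]),
      Finset.card_insert_of_notMem (by simp [Ne.symm hwne1])]
    simp
  calc 3 = ({0, 1, w} : Finset (ZMod p)).card := hcard.symm
    _ ≤ _ := Finset.card_le_card hsub

noncomputable def Eset (p m n : ℕ) [NeZero p] : ℕ → Finset (ZMod p)
  | 0 => {0}
  | r+1 => Eset p m n r + Finset.image (fun ρ => (-1 : ZMod p)^(r+1) * ρ) (Rset p m n)

lemma Eset_nonempty (m n : ℕ) : ∀ r, (Eset p m n r).Nonempty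
  | 0 => ⟨0, by simp [Eset]⟩
  | r+1 => by
    obtain ⟨e, he⟩ := Eset_nonempty m n r
    exact ⟨e + (-1 : ZMod p)^(r+1) * 1,
      Finset.add_mem_add he (Finset.mem_image.2 ⟨1, one_mem_Rset m n, rfl⟩)⟩

lemma Eset_card {m n : ℕ} (hm : 1 ≤ m) (hmn : m ≤ n) (hn : n ≤ p - 1)
    (hne : ¬(m = p - 1 ∧ n = p - 1)) :
    ∀ r, min p (2*r+1) ≤ (Eset p m n r).card
  | 0 => by
    have hp2 := (Fact.out : p.Prime).two_le
    have : (Eset p m n 0).card = 1 := by simp [Eset]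
    omega
  | r+1 => by
    have IH := Eset_card hm hmn hn hne r
    have hR := Rset_card hm hmn hn hne
    have himg : (Finset.image (fun ρ => (-1 : ZMod p)^(r+1) * ρ) (Rset p m n)).card
        = (Rset p m n).card :=
      Finset.card_image_of_injective _
        (mul_right_injective₀ (pow_ne_zero _ (neg_ne_zero.2 one_ne_zero)))
    have himgne : (Finset.image (fun ρ => (-1 : ZMod p)^(r+1) * ρ) (Rset p m n)).Nonempty :=
      ⟨_, Finset.mem_image.2 ⟨1, one_mem_Rset m n, rfl⟩⟩
    have hCD := ZMod.cauchy_davenport (Fact.out : p.Prime) (Eset_nonempty m n r) himgne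
    have : (Eset p m n (r+1)).card = (Eset p m n r + _).card := rfl
    rw [show Eset p m n (r+1)
        = Eset p m n r + Finset.image (fun ρ => (-1 : ZMod p)^(r+1) * ρ) (Rset p m n) from rfl]
    omega

lemma Eset_walk (m n : ℕ) (hm : 1 ≤ m) (hn : 1 ≤ n) :
    ∀ (r : ℕ) (c : ZMod p), c ∈ Eset p m n r → ∀ γ : ZMod p,
      walkLen (monomialArc (F := ZMod p) m n) (3*r)
        ((0 : ZMod p), γ) ((0 : ZMod p), (-1 : ZMod p)^r * γ + c)
  | 0, c, hc, γ => by
    simp only [Eset, Finset.mem_singleton] at hc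
    subst hc
    have : ((0 : ZMod p), (-1 : ZMod p)^0 * γ + 0) = ((0 : ZMod p), γ) := by
      simp
    rw [this]
    rfl
  | r+1, c, hc, γ => by
    rw [show Eset p m n (r+1)
        = Eset p m n r + Finset.image (fun ρ => (-1 : ZMod p)^(r+1) * ρ) (Rset p m n) from rfl]
        at hc
    obtain ⟨e, he, ρ', hρ', rfl⟩ := Finset.mem_add.1 hc
    obtain ⟨ρ, hρ, rfl⟩ := Finset.mem_image.1 hρ'
    obtain ⟨⟨u, v⟩, _, rfl⟩ := Finset.mem_image.1 hρ
    have hm0 : m ≠ 0 := by omega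
    have hn0 : n ≠ 0 := by omega
    have w1 : monomialArc (F := ZMod p) m n ((0 : ZMod p), γ) (u, -γ) := by
      simp [monomialArc, zero_pow hm0]
    have w2 : monomialArc (F := ZMod p) m n (u, -γ) (v, u^m * v^n + γ) := by
      simp [monomialArc]
    have w3 : monomialArc (F := ZMod p) m n (v, u^m * v^n + γ)
        ((0 : ZMod p), -(u^m * v^n) - γ) := by
      simp [monomialArc, zero_pow hn0]
    have W3 : walkLen (monomialArc (F := ZMod p) m n) (1+(1+1))
        ((0 : ZMod p), γ) ((0 : ZMod p), -(u^m * v^n) - γ) :=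
      walkLen_trans' (wl1 w1) (walkLen_trans' (wl1 w2) (wl1 w3))
    have WR := Eset_walk m n hm hn r e he (-(u^m * v^n) - γ)
    have W := walkLen_trans' W3 WR
    have he3 : 3*(r+1) = 1+(1+1) + 3*r := by omega
    rw [he3]
    convert W using 2
    rw [pow_succ]
    ring

lemma forward_all {m n h : ℕ} (hh : p = 2*h+1)
    (hm : 1 ≤ m) (hmn : m ≤ n) (hn : n ≤ p - 1)
    (hne : ¬(m = p - 1 ∧ n = p - 1)) (u v : ZMod p × ZMod p) :
    walkLen (monomialArc (F := ZMod p) m n) (3*h+2) u v := by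
  obtain ⟨a, α⟩ := u
  obtain ⟨b, β⟩ := v
  have hm0 : m ≠ 0 := by omega
  have hn0 : n ≠ 0 := by omega
  have huniv : Eset p m n h = Finset.univ := by
    apply Finset.eq_univ_of_card
    have h1 := Eset_card hm hmn hn hne h
    have h2 : (Eset p m n h).card ≤ Fintype.card (ZMod p) := Finset.card_le_univ _
    rw [ZMod.card] at h2 ⊢
    omega
  set c : ZMod p := -β - (-1 : ZMod p)^h * (-α) with hc
  have hcmem : c ∈ Eset p m n h := huniv ▸ Finset.mem_univ c
  have w1 : monomialArc (F := ZMod p) m n (a, α) ((0 : ZMod p), -α) := by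
    simp [monomialArc, zero_pow hn0]
  have WE := Eset_walk m n hm (by omega) h c hcmem (-α)
  have w2 : monomialArc (F := ZMod p) m n ((0 : ZMod p), (-1 : ZMod p)^h * (-α) + c) (b, β) := by
    simp only [monomialArc, hc]
    rw [zero_pow hm0, zero_mul]
    ring
  have W := walkLen_trans' (wl1 w1) (walkLen_trans' WE (wl1 w2))
  have he : 3*h+2 = 1 + (3*h + 1) := by omega
  rw [he]
  exact W

end Forward


section Assembly

lemma ddiam_eq_of {V : Type*} {r : V → V → Prop} {c : ℕ}
    (hub : ∀ x y : V, ∃ k ≤ c, walkLen r k x y)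
    (hlb : ∃ x y : V, ∀ k, walkLen r k x y → c ≤ k) : ddiam r = (c : ℕ∞) := by
  refine le_antisymm (ddiam_le hub) ?_
  obtain ⟨x, y, hxy⟩ := hlb
  exact le_trans (le_ddist hxy) ddist_le_ddiam

instance : Fact (Nat.Prime 2) := ⟨by norm_num⟩
instance : Fact (Nat.Prime 3) := ⟨by norm_num⟩

set_option maxRecDepth 40000 in
lemma D2a : ∀ x y : ZMod 2 × ZMod 2, ∃ k ∈ Finset.range 4,
    walkLen (monomialArc (F := ZMod 2) 1 1) k x y := by decide

set_option maxRecDepth 40000 in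
lemma D2b : ∃ x y : ZMod 2 × ZMod 2, ∀ k ∈ Finset.range 3,
    ¬ walkLen (monomialArc (F := ZMod 2) 1 1) k x y := by decide

set_option maxRecDepth 100000 in
lemma D3a : ∀ x y : ZMod 3 × ZMod 3, ∃ k ∈ Finset.range 4,
    walkLen (monomialArc (F := ZMod 3) 1 1) k x y := by decide

set_option maxRecDepth 100000 in
lemma D3b : ∀ x y : ZMod 3 × ZMod 3, ∃ k ∈ Finset.range 4,
    walkLen (monomialArc (F := ZMod 3) 1 2) k x y := by decide

lemma zmod_version {p m n : ℕ} [Fact p.Prime]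
    (hm : 1 ≤ m) (hmn : m ≤ n) (hn : n ≤ p - 1) :
    ddiam (monomialArc (F := ZMod p) m n) = ((2 * p - 1 : ℕ) : ℕ∞) ↔
      m = p - 1 ∧ n = p - 1 := by
  have hp : p.Prime := Fact.out
  constructor
  · -- forward
    intro hLHS
    by_contra hne
    by_cases hp2 : p = 2
    · subst hp2
      exact hne ⟨by omega, by omega⟩
    · obtain ⟨h, hh⟩ := hp.odd_of_ne_two hp2
      by_cases hp3 : p = 3
      · subst hp3
        have hm1 : m = 1 := by
          rcases Nat.lt_or_ge m 2 with h1 | h1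
          · omega
          · exfalso; exact hne ⟨by omega, by omega⟩
        subst hm1
        have hub : ddiam (monomialArc (F := ZMod 3) 1 n) ≤ ((3 : ℕ) : ℕ∞) := by
          apply ddiam_le
          intro x y
          rcases Nat.lt_or_ge n 2 with h2 | h2
          · have hn1 : n = 1 := by omega
            subst hn1
            obtain ⟨k, hk, hw⟩ := D3a x y
            exact ⟨k, by have := Finset.mem_range.1 hk; omega, hw⟩
          · have hn2 : n = 2 := by omega
            subst hn2
            obtain ⟨k, hk, hw⟩ := D3b x y
            exact ⟨k, by have := Finset.mem_range.1 hk; omega, hw⟩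
        rw [hLHS] at hub
        have := (Nat.cast_le (α := ℕ∞)).1 hub
        omega
      · have hh2 : 2 ≤ h := by
          have := hp.two_le
          omega
        have hub : ddiam (monomialArc (F := ZMod p) m n) ≤ ((3*h+2 : ℕ) : ℕ∞) := by
          apply ddiam_le
          intro x y
          exact ⟨3*h+2, le_refl _, forward_all hh hm hmn hn hne x y⟩
        rw [hLHS] at hub
        have := (Nat.cast_le (α := ℕ∞)).1 hub
        omega
  · -- backward
    rintro ⟨rfl, hn'⟩
    subst hn'
    by_cases hp2 : p = 2
    · subst hp2
      norm_num
      apply ddiam_eq_of (c := 3)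
      · intro x y
        obtain ⟨k, hk, hw⟩ := D2a x y
        exact ⟨k, by have := Finset.mem_range.1 hk; omega, hw⟩
      · obtain ⟨x, y, hxy⟩ := D2b
        refine ⟨x, y, fun k hw => ?_⟩
        by_contra hlt
        exact hxy k (Finset.mem_range.2 (by omega)) hw
    · obtain ⟨h, hh⟩ := hp.odd_of_ne_two hp2
      have hh1 : 1 ≤ h := by
        have := hp.two_le
        omega
      apply ddiam_eq_of
      · intro x y
        obtain ⟨k, hk, hw⟩ := upper_all hh x y
        exact ⟨k, by omega, hw⟩
      · refine ⟨((0 : ZMod p), (0 : ZMod p)), ((1 : ZMod p), ((h+1 : ℕ) : ZMod p)),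
          fun k hw => ?_⟩
        by_contra hlt
        exact lower_bound h hh k (by omega) hw

end Assembly

theorem diam_eq_two_p_sub_one_iff {p m n : ℕ} (hp : p.Prime)
    (F : Type*) [Field F] [Fintype F] (hF : Fintype.card F = p)
    (hm : 1 ≤ m) (hmn : m ≤ n) (hn : n ≤ p - 1) :
    ddiam (monomialArc (F := F) m n) = ((2 * p - 1 : ℕ) : ℕ∞) ↔
      m = p - 1 ∧ n = p - 1 := by
  haveI : Fact p.Prime := ⟨hp⟩
  let φ : ZMod p ≃+* F := ZMod.ringEquivOfPrime F hp hF
  let e : (ZMod p × ZMod p) ≃ (F × F) := φ.toEquiv.prodCongr φ.toEquiv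
  have harc : ∀ a b : ZMod p × ZMod p,
      monomialArc m n a b ↔ monomialArc m n (e a) (e b) := by
    intro a b
    show (a.2 + b.2 = a.1 ^ m * b.1 ^ n) ↔ (φ a.2 + φ b.2 = (φ a.1) ^ m * (φ b.1) ^ n)
    rw [← map_pow, ← map_pow, ← map_mul, ← map_add]
    exact (EmbeddingLike.apply_eq_iff_eq φ).symm
  rw [← ddiam_equiv e harc]
  exact zmod_version hm hmn hn
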